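/- (Theorem 2, convergence rate of the discretized distributed AGM.) Consider the algorithm initialized with X₀ = Z₀ ∈ H, with first-iteration updates X₀⁺ = X₀, Z₁ = Z₀, X₁ = X₀, and for k ≥ 1 the updates X_k⁺ = X_k − (s_k/2)·G_k(X_k), Z_{k+1} = Z_k − s_k·θ_k·G_k(X_k), X_{k+1} = (θ_k²/θ_{k+1}²)·X_k⁺ + (1 − θ_k²/θ_{k+1}²)·Z_{k+1}. Suppose the step sizes satisfy: s₀ > 0; 0 < s₀ ≤ s₁ ≤ 2/L̃₁ and r₁ ≥ 0; for every k ≥ 1, s_{k+1} > 0 satisfies the four-case bound (i) s_{k+1}·b_{k+1} ≤ 4·a_{k+1} if w_{k+1} ≤ 0 and r_{k+1} ≥ 0, (ii) s_{k+1}·(A_k·b_{k+1} + θ_{k+1}·(−r_{k+1})) ≤ 4·A_k·a_{k+1} if w_{k+1} ≤ 0 and r_{k+1} < 0, (iii) s_{k+1}·b̃_{k+1} ≤ 4·ã_{k+1} if w_{k+1} > 0 and r_{k+1} ≥ 0, (iv) s_{k+1}·(A_k·b̃_{k+1} + θ_{k+1}·(−r_{k+1})) ≤ 4·A_k·ã_{k+1}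 if w_{k+1} > 0 and r_{k+1} < 0; and additionally, for every k ≥ 1 (respectively k ≥ 2 as in the paper, strengthened to k ≥ 1 for the initial case), s_k ≤ s_{k+1} and s_k ≤ 1/max{λ̄, (kh)^{−β}·L_f} (i.e., s_k ≤ 2/L̃_k). Then for every iteration k ≥ 1, F(X_k⁺) − F* ≤ (2·h^β·‖X₀ − X*‖² / s₀) · k^{−(2−β)}; i.e., the algorithm converges at rate O(1/k^{2−β}). -/

import Mathlib

open scoped RealInnerProductSpace

noncomputable section

/-- `θ_k = k/2`. -/
def thetaSeq (k : ℕ) : ℝ := (k : ℝ) / 2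

/-- `c_k = θ_{k+1} / (θ_{k+1}² − θ_k²)`. -/
def cSeq (k : ℕ) : ℝ := thetaSeq (k + 1) / (thetaSeq (k + 1) ^ 2 - thetaSeq k ^ 2)

/-- `A_k = c_k · θ_k²`. -/
def ASeq (k : ℕ) : ℝ := cSeq k * thetaSeq k ^ 2

variable {H : Type*} [NormedAddCommGroup H] [InnerProductSpace ℝ H] [FiniteDimensional ℝ H]

/-- `G_k(Y) = (2θ_k h)^{−β} ∇F(Y) + L̃Y`. -/
def Gmap (h β : ℝ) (F : H → ℝ) (L : H →L[ℝ] H) (k : ℕ) (Y : H) : H :=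
  ((2 * thetaSeq k * h) ^ (-β)) • gradient F Y + L Y

/-- `L̃_k = 2·max{λ̄, (kh)^{−β}·L_f}`. -/
def LSmooth (lambar Lf h β : ℝ) (k : ℕ) : ℝ :=
  2 * max lambar (((k : ℝ) * h) ^ (-β) * Lf)

/-- Lyapunov function `V_k` (for `k ≥ 1`). -/
def VSeq (h β : ℝ) (F : H → ℝ) (L : H →L[ℝ] H) (Xs : H) (X Z : ℕ → H) (s : ℕ → ℝ)
    (k : ℕ) : ℝ :=
  2 * ASeq k * (((2 * thetaSeq k * h) ^ (-β)) * (F (X k) - F Xs)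
      + (1 / 2) * ⟪X k - Xs, L (X k - Xs)⟫
      - (s k / 4) * ‖Gmap h β F L k (X k)‖ ^ 2)
    + (1 / s k) * ‖Z (k + 1) - Xs‖ ^ 2

/-- `a_{k+1}` (indexed so that `aSeq … k = a_{k+1}`). -/
def aSeq (h β : ℝ) (F : H → ℝ) (L : H →L[ℝ] H) (Xs : H) (X : ℕ → H) (k : ℕ) : ℝ :=
  ((2 * thetaSeq k * h) ^ (-β)) * (F (X k) - F Xs)
    + (1 / 2) * ⟪X k - Xs, L (X k - Xs)⟫
    - ((2 * thetaSeq (k + 1) * h) ^ (-β)) * (F (X (k + 1)) - F Xs)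
    - (1 / 2) * ⟪X (k + 1) - Xs, L (X (k + 1) - Xs)⟫
    - ⟪Gmap h β F L (k + 1) (X (k + 1)), X k - X (k + 1)⟫

/-- `b_{k+1}` (indexed so that `bSeq … k = b_{k+1}`). -/
def bSeq (h β : ℝ) (F : H → ℝ) (L : H →L[ℝ] H) (X : ℕ → H) (k : ℕ) : ℝ :=
  ‖Gmap h β F L k (X k) - Gmap h β F L (k + 1) (X (k + 1))‖ ^ 2

/-- `ã_{k+1}` (indexed so that `atilSeq … k = ã_{k+1}`). -/
def atilSeq (h β : ℝ) (F : H → ℝ) (L : H →L[ℝ] H) (Xs : H) (X : ℕ → H) (s : ℕ → ℝ)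
    (k : ℕ) : ℝ :=
  aSeq h β F L Xs X k
    + (s k / 2) * ⟪Gmap h β F L (k + 1) (X (k + 1)), Gmap h β F L k (X k)⟫

/-- `b̃_{k+1}` (indexed so that `btilSeq … k = b̃_{k+1}`). -/
def btilSeq (h β : ℝ) (F : H → ℝ) (L : H →L[ℝ] H) (X : ℕ → H) (k : ℕ) : ℝ :=
  ‖Gmap h β F L k (X k)‖ ^ 2 + ‖Gmap h β F L (k + 1) (X (k + 1))‖ ^ 2

/-- `w_{k+1}` (indexed so that `wSeq … k = w_{k+1}`). -/
def wSeq (h β : ℝ) (F : H → ℝ) (L : H →L[ℝ] H) (X : ℕ → H) (k : ℕ) : ℝ :=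
  ⟪Gmap h β F L (k + 1) (X (k + 1)), Gmap h β F L k (X k)⟫

/-- `r_{k+1}` (indexed so that `rSeq … k = r_{k+1}`). -/
def rSeq (h β : ℝ) (F : H → ℝ) (L : H →L[ℝ] H) (Xs : H) (X : ℕ → H) (k : ℕ) : ℝ :=
  -‖((2 * thetaSeq (k + 1) * h) ^ (-β)) • gradient F Xs‖ ^ 2
    + 2 * ⟪((2 * thetaSeq (k + 1) * h) ^ (-β)) • gradient F Xs,
        ((2 * thetaSeq (k + 1) * h) ^ (-β)) • gradient F Xs
          - Gmap h β F L (k + 1) (X (k + 1))⟫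

/-- `q_{k+1}` (indexed so that `qSeq … k = q_{k+1}`). -/
def qSeq (h β : ℝ) (F : H → ℝ) (L : H →L[ℝ] H) (Xs : H) (X : ℕ → H) (s : ℕ → ℝ)
    (k : ℕ) : ℝ :=
  aSeq h β F L Xs X k
    - (s (k + 1) / 4) * ‖Gmap h β F L k (X k)‖ ^ 2
    - (s (k + 1) / 4) * ‖Gmap h β F L (k + 1) (X (k + 1))‖ ^ 2
    + (s k / 2) * ⟪Gmap h β F L (k + 1) (X (k + 1)), Gmap h β F L k (X k)⟫

-- auxiliary lemmas (to be placed above the theorem)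
section dAGMAux
open Set

lemma dAGM_theta_succ (k : ℕ) : thetaSeq (k+1) = ((k:ℝ)+1)/2 := by
  rw [thetaSeq]; push_cast; ring

lemma dAGM_ASeq_eq (k : ℕ) : ASeq k = (k:ℝ)^2*((k:ℝ)+1)/(2*(2*(k:ℝ)+1)) := by
  have h : thetaSeq (k+1)^2 - thetaSeq k ^2 = (2*(k:ℝ)+1)/4 := by
    rw [dAGM_theta_succ, thetaSeq]; ring
  rw [ASeq, cSeq, h, dAGM_theta_succ, thetaSeq]
  have : (2*(k:ℝ)+1) ≠ 0 := by positivity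
  field_simp
  ring

lemma dAGM_ASeq_pos (k : ℕ) (hk : 1 ≤ k) : 0 < ASeq k := by
  rw [dAGM_ASeq_eq]
  have : (1:ℝ) ≤ (k:ℝ) := by exact_mod_cast hk
  positivity

lemma dAGM_c1 (k : ℕ) : cSeq k * thetaSeq (k+1)^2 - ASeq k = thetaSeq (k+1) := by
  have h : thetaSeq (k+1)^2 - thetaSeq k ^2 = (2*(k:ℝ)+1)/4 := by
    rw [dAGM_theta_succ, thetaSeq]; ring
  have h2 : (2*(k:ℝ)+1) ≠ 0 := by positivity
  rw [ASeq, cSeq, h, dAGM_theta_succ, thetaSeq]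
  field_simp
  ring

lemma dAGM_c2 (k : ℕ) : ASeq (k+1) - ASeq k - thetaSeq (k+1) ≤ 0 := by
  rw [dAGM_ASeq_eq, dAGM_ASeq_eq, dAGM_theta_succ]
  push_cast
  set K := (k:ℝ) with hKdef
  have hK : 0 ≤ K := Nat.cast_nonneg k
  have d1 : (0:ℝ) < 2*(2*(K+1)+1) := by linarith
  have d2 : (0:ℝ) < 2*(2*K+1) := by linarith
  have e : (K+1)^2*((K+1)+1)/(2*(2*(K+1)+1)) - K^2*(K+1)/(2*(2*K+1)) - (K+1)/2 ≤ 0 := by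
    rw [div_sub_div _ _ (ne_of_gt d1) (ne_of_gt d2), div_sub_div _ _ (by positivity) (two_ne_zero)]
    apply div_nonpos_of_nonpos_of_nonneg
    · nlinarith [sq_nonneg (K+1), sq_nonneg K]
    · positivity
  calc (K+1)^2*(K+1+1)/(2*(2*(K+1)+1)) - K^2*(K+1)/(2*(2*K+1)) - (K+1)/2 ≤ 0 := e

lemma dAGM_c4 (k : ℕ) (hk : 1 ≤ k) :
    thetaSeq (k+1)^2 - ASeq (k+1)/2 - thetaSeq (k+1)/2 ≤ ASeq k / 2 := by
  rw [dAGM_ASeq_eq, dAGM_ASeq_eq, dAGM_theta_succ]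
  push_cast
  set K := (k:ℝ) with hKdef
  have hK : 1 ≤ K := by rw [hKdef]; exact_mod_cast hk
  have d1 : (0:ℝ) < 2*(2*(K+1)+1) := by linarith
  have d2 : (0:ℝ) < 2*(2*K+1) := by linarith
  rw [← sub_nonpos]
  have e1 : ((K+1)/2)^2 - (K+1)^2*((K+1)+1)/(2*(2*(K+1)+1))/2 - (K+1)/2/2 - K^2*(K+1)/(2*(2*K+1))/2
      = ((K+1)^2*(2*(2*(K+1)+1))*(2*(2*K+1)) - (K+1)^2*((K+1)+1)*2*(2*(2*K+1))
        - (K+1)*(2*(2*(K+1)+1))*(2*(2*K+1)) - K^2*(K+1)*2*(2*(2*(K+1)+1)))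
        / (4*(2*(2*(K+1)+1))*(2*(2*K+1))) := by
    field_simp
    ring
  calc ((K+1)/2)^2 - (K+1)^2*(K+1+1)/(2*(2*(K+1)+1))/2 - (K+1)/2/2 - K^2*(K+1)/(2*(2*K+1))/2
      = ((K+1)^2*(2*(2*(K+1)+1))*(2*(2*K+1)) - (K+1)^2*((K+1)+1)*2*(2*(2*K+1))
        - (K+1)*(2*(2*(K+1)+1))*(2*(2*K+1)) - K^2*(K+1)*2*(2*(2*(K+1)+1)))
        / (4*(2*(2*(K+1)+1))*(2*(2*K+1))) := e1
    _ ≤ 0 := by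
        apply div_nonpos_of_nonpos_of_nonneg
        · nlinarith [sq_nonneg (K+1), sq_nonneg K]
        · positivity

lemma dAGM_fourA (k : ℕ) (hk : 1 ≤ k) : (k:ℝ)^2 ≤ 4 * ASeq k := by
  rw [dAGM_ASeq_eq]
  have hK : 1 ≤ (k:ℝ) := by exact_mod_cast hk
  have hden : (0:ℝ) < 2*(2*(k:ℝ)+1) := by linarith
  rw [show (4:ℝ) * ((k:ℝ)^2*((k:ℝ)+1)/(2*(2*(k:ℝ)+1))) = 4*((k:ℝ)^2*((k:ℝ)+1))/(2*(2*(k:ℝ)+1)) by ring,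
    le_div_iff₀ hden]
  nlinarith

variable {H : Type*} [NormedAddCommGroup H] [InnerProductSpace ℝ H] [CompleteSpace H]

lemma dAGM_lineDeriv (F : H → ℝ) (hF : Differentiable ℝ F) (x d : H) (t : ℝ) :
    HasDerivAt (fun t : ℝ => F (x + t • d)) ⟪gradient F (x + t • d), d⟫ t := by
  have h1 : HasDerivAt (fun t : ℝ => x + t • d) d t := by
    simpa using ((hasDerivAt_id t).smul_const d).const_add x
  have h2 := ((hF (x + t • d)).hasGradientAt).hasFDerivAt
  have := h2.comp_hasDerivAt t h1
  simpa [Function.comp_def] using this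

lemma dAGM_subgrad (F : H → ℝ) (hF : Differentiable ℝ F) (hconv : ConvexOn ℝ Set.univ F)
    (x y : H) : F x + ⟪gradient F x, y - x⟫ ≤ F y := by
  set d := y - x with hd
  have hg : ConvexOn ℝ Set.univ (fun t : ℝ => F (x + t • d)) := by
    have h := hconv.comp_affineMap (AffineMap.lineMap x y)
    have he : (F ∘ (AffineMap.lineMap x y)) = (fun t : ℝ => F (x + t • d)) := by
      funext t
      simp [AffineMap.lineMap_apply, hd]
      congr 1
      module
    rw [he] at h
    simpa using h
  have hder := dAGM_lineDeriv F hF x d 0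
  simp only [zero_smul, add_zero] at hder
  have := hg.le_slope_of_hasDerivAt (Set.mem_univ (0:ℝ)) (Set.mem_univ (1:ℝ)) one_pos hder
  rw [slope_def_field] at this
  simp at this
  have hxy : x + d = y := by rw [hd]; abel
  rw [hxy] at this
  linarith [this, (by simp : ⟪gradient F x, d⟫ = (fderiv ℝ F x) d)]

lemma dAGM_descent (F : H → ℝ) (hF : Differentiable ℝ F) (Lf : ℝ)
    (hlip : ∀ x y : H, ‖gradient F x - gradient F y‖ ≤ Lf * ‖x - y‖)
    (x d : H) : F (x + d) ≤ F x + ⟪gradient F x, d⟫ + Lf / 2 * ‖d‖ ^ 2 := by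
  set ψ : ℝ → ℝ := fun t => Lf * ‖d‖ ^ 2 / 2 * t ^ 2 - F (x + t • d) + F x
      + ⟪gradient F x, d⟫ * t with hψ
  have hder : ∀ t : ℝ, HasDerivAt ψ
      (Lf * ‖d‖ ^ 2 * t - ⟪gradient F (x + t • d), d⟫ + ⟪gradient F x, d⟫) t := by
    intro t
    have h1 := dAGM_lineDeriv F hF x d t
    have h2 : HasDerivAt (fun t : ℝ => Lf * ‖d‖ ^ 2 / 2 * t ^ 2) (Lf * ‖d‖ ^ 2 * t) t := by
      have := (hasDerivAt_pow 2 t).const_mul (Lf * ‖d‖ ^ 2 / 2)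
      convert this using 1
      · rfl
      · rfl
      push_cast
      ring
    have h3 : HasDerivAt (fun t : ℝ => ⟪gradient F x, d⟫ * t) ⟪gradient F x, d⟫ t := by
      simpa using (hasDerivAt_id t).const_mul ⟪gradient F x, d⟫
    have := ((h2.sub h1).add_const (F x)).add h3
    convert this using 1
    all_goals rfl
  have hmono : MonotoneOn ψ (Set.Icc 0 1) := by
    apply monotoneOn_of_deriv_nonneg (convex_Icc 0 1)
    · exact (Continuous.continuousOn
        ((Differentiable.continuous (fun t => (hder t).differentiableAt))))
    · intro t ht
      exact (hder t).differentiableAt.differentiableWithinAt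
    · intro t ht
      rw [interior_Icc] at ht
      rw [(hder t).deriv]
      have hle : ⟪gradient F (x + t • d) - gradient F x, d⟫ ≤ Lf * ‖d‖ ^ 2 * t := by
        calc ⟪gradient F (x + t • d) - gradient F x, d⟫
            ≤ ‖gradient F (x + t • d) - gradient F x‖ * ‖d‖ := real_inner_le_norm _ _
          _ ≤ (Lf * ‖x + t • d - x‖) * ‖d‖ := by
              gcongr; exact hlip _ _
          _ = Lf * ‖d‖ ^ 2 * t := by
              have hn : ‖x + t • d - x‖ = t * ‖d‖ := by
                simp [norm_smul, abs_of_pos ht.1]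
              rw [hn]; ring
      rw [inner_sub_left] at hle
      linarith
  have h01 := hmono (Set.mem_Icc.2 ⟨le_refl 0, zero_le_one⟩)
    (Set.mem_Icc.2 ⟨zero_le_one, le_refl 1⟩) zero_le_one
  simp [hψ] at h01
  linarith [h01, (by simp : ⟪gradient F x, d⟫ = (fderiv ℝ F x) d)]

lemma dAGM_op_ub (L : H →L[ℝ] H) (v : H) : ⟪v, L v⟫ ≤ ‖L‖ * ‖v‖ ^ 2 := by
  calc ⟪v, L v⟫ ≤ ‖v‖ * ‖L v‖ := real_inner_le_norm _ _
    _ ≤ ‖v‖ * (‖L‖ * ‖v‖) := by gcongr; exact L.le_opNorm v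
    _ = ‖L‖ * ‖v‖ ^ 2 := by ring

lemma dAGM_op_sq (L : H →L[ℝ] H) (hsym : ∀ x y : H, ⟪L x, y⟫ = ⟪x, L y⟫)
    (hpsd : ∀ x : H, 0 ≤ ⟪x, L x⟫) (v : H) : ‖L v‖ ^ 2 ≤ ‖L‖ * ⟪v, L v⟫ := by
  rcases eq_or_lt_of_le (norm_nonneg L) with h0 | hpos
  · have : L = 0 := by simpa using (norm_eq_zero.1 h0.symm)
    simp [this]
  · set lam := ‖L‖
    have h1 := hpsd (lam • v - L v)
    have he : L (lam • v - L v) = lam • L v - L (L v) := by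
      simp [map_sub, map_smul]
    rw [he, inner_sub_left, inner_sub_right, inner_sub_right] at h1
    rw [real_inner_smul_left, real_inner_smul_left, real_inner_smul_right,
      real_inner_smul_right] at h1
    have h2 : ⟪v, L (L v)⟫ = ⟪L v, L v⟫ := (hsym v (L v)).symm.trans (by rw [hsym])
    have h3 : ⟪L v, L (L v)⟫ ≤ lam * ‖L v‖ ^ 2 := dAGM_op_ub L (L v)
    have h4 : ⟪L v, L v⟫ = ‖L v‖ ^ 2 := real_inner_self_eq_norm_sq _
    nlinarith [h1, h2, h3, h4]

end dAGMAux
section dAGMAux2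
open Set

/-- abbreviation for the scaling factor -/
def muSeq (h β : ℝ) (m : ℕ) : ℝ := ((m:ℝ)*h)^(-β)

lemma dAGM_mu_eq (h β : ℝ) (m : ℕ) : (2 * thetaSeq m * h)^(-β) = muSeq h β m := by
  rw [muSeq, thetaSeq]; ring_nf

lemma dAGM_mu_pos (h β : ℝ) (hh : 0 < h) (m : ℕ) (hm : 1 ≤ m) : 0 < muSeq h β m := by
  apply Real.rpow_pos_of_pos
  have : (1:ℝ) ≤ (m:ℝ) := by exact_mod_cast hm
  positivity

variable {H : Type*} [NormedAddCommGroup H] [InnerProductSpace ℝ H] [FiniteDimensional ℝ H]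

lemma dAGM_Gmap_eq (h β : ℝ) (F : H → ℝ) (L : H →L[ℝ] H) (m : ℕ) (x : H) :
    Gmap h β F L m x = muSeq h β m • gradient F x + L x := by
  rw [Gmap, dAGM_mu_eq]

lemma dAGM_grad_min_zero (F : H → ℝ) (hF : Differentiable ℝ F) (Xs : H)
    (hmin : ∀ Y : H, F Xs ≤ F Y) : gradient F Xs = 0 := by
  have hloc : IsLocalMin F Xs := Filter.Eventually.of_forall hmin
  have h1 := hloc.hasFDerivAt_eq_zero ((hF Xs).hasGradientAt).hasFDerivAt
  have h2 := congrArg (fun f => (InnerProductSpace.toDual ℝ H).symm f) h1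
  exact (InnerProductSpace.toDual ℝ H).injective (h1.trans (map_zero _).symm)

lemma dAGM_lower (F : H → ℝ) (hF : Differentiable ℝ F) (hconv : ConvexOn ℝ Set.univ F)
    (Lf : ℝ) (hLf : 0 < Lf)
    (hlip : ∀ x y : H, ‖gradient F x - gradient F y‖ ≤ Lf * ‖x - y‖)
    (Xs : H) (hmin : ∀ Y : H, F Xs ≤ F Y) (x : H) :
    F x - F Xs ≤ ⟪gradient F x, x - Xs⟫ - 1/(2*Lf) * ‖gradient F x‖^2 := by
  set g := gradient F x with hg
  have h1 := dAGM_subgrad F hF hconv x (Xs + Lf⁻¹ • g)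
  have h2 := dAGM_descent F hF Lf hlip Xs (Lf⁻¹ • g)
  rw [dAGM_grad_min_zero F hF Xs hmin] at h2
  have e1 : ⟪g, Xs + Lf⁻¹ • g - x⟫ = ⟪g, Xs - x⟫ + Lf⁻¹ * ‖g‖^2 := by
    rw [show Xs + Lf⁻¹ • g - x = (Xs - x) + Lf⁻¹ • g by abel, inner_add_right,
      real_inner_smul_right, real_inner_self_eq_norm_sq]
  have e2 : ‖Lf⁻¹ • g‖^2 = Lf⁻¹^2 * ‖g‖^2 := by
    rw [norm_smul, Real.norm_eq_abs, abs_inv, abs_of_pos hLf, mul_pow]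
  rw [e1] at h1
  rw [e2] at h2
  simp only [inner_zero_left] at h2
  have e3 : ⟪g, Xs - x⟫ = -⟪g, x - Xs⟫ := by
    rw [show Xs - x = -(x - Xs) by abel, inner_neg_right]
  rw [e3] at h1
  have hfs : Lf⁻¹ * ‖g‖^2 - Lf/2 * (Lf⁻¹^2 * ‖g‖^2) = 1/(2*Lf) * ‖g‖^2 := by
    field_simp
    ring
  linarith [h1, h2, hfs]

set_option maxHeartbeats 1000000 in
lemma dAGM_Phi_ub (F : H → ℝ) (hF : Differentiable ℝ F) (hconv : ConvexOn ℝ Set.univ F)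
    (Lf : ℝ) (hLf : 0 < Lf)
    (hlip : ∀ x y : H, ‖gradient F x - gradient F y‖ ≤ Lf * ‖x - y‖)
    (L : H →L[ℝ] H) (hsym : ∀ x y : H, ⟪L x, y⟫ = ⟪x, L y⟫)
    (hpsd : ∀ x : H, 0 ≤ ⟪x, L x⟫) (lambar : ℝ) (hlam : ‖L‖ = lambar)
    (Xs : H) (hXs : L Xs = 0) (hmin : ∀ Y : H, F Xs ≤ F Y)
    (h β : ℝ) (hh : 0 < h) (m : ℕ) (hm : 1 ≤ m) (x : H) :
    muSeq h β m * (F x - F Xs) + 1/2 * ⟪x - Xs, L (x - Xs)⟫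
      ≤ ⟪Gmap h β F L m x, x - Xs⟫
        - 1/(4 * max lambar (muSeq h β m * Lf)) * ‖Gmap h β F L m x‖^2 := by
  have hμpos : 0 < muSeq h β m := dAGM_mu_pos h β hh m hm
  set μ := muSeq h β m with hμ
  set g := gradient F x with hg
  set a := μ • g with ha
  set b := L x with hb
  set M := max lambar (μ * Lf) with hM
  have hMpos : 0 < M := lt_of_lt_of_le (by positivity) (le_max_right _ _)
  have hMlf : μ * Lf ≤ M := le_max_right _ _
  have hMlam : lambar ≤ M := le_max_left _ _
  have hlow := dAGM_lower F hF hconv Lf hLf hlip Xs hmin x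
  have hGeq : Gmap h β F L m x = a + b := dAGM_Gmap_eq h β F L m x
  have hLsub : L (x - Xs) = b := by rw [map_sub, hXs, sub_zero]
  have hvnn : (0:ℝ) ≤ ⟪x - Xs, L (x - Xs)⟫ := hpsd _
  have ia : ⟪a, x - Xs⟫ = μ * ⟪g, x - Xs⟫ := real_inner_smul_left _ _ _
  have ina : ‖a‖^2 = μ^2 * ‖g‖^2 := by
    rw [ha, norm_smul, Real.norm_eq_abs, abs_of_pos hμpos, mul_pow]
  have ib : ⟪b, x - Xs⟫ = ⟪x - Xs, L (x - Xs)⟫ := by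
    rw [hLsub]; exact real_inner_comm _ _
  have inb : ‖b‖^2 ≤ lambar * ⟪x - Xs, L (x - Xs)⟫ := by
    have h0 := dAGM_op_sq L hsym hpsd (x - Xs)
    rw [hlam] at h0
    rw [← hLsub]
    exact h0
  have j1 : 1/(2*M) * ‖a‖^2 ≤ ⟪a, x - Xs⟫ - μ * (F x - F Xs) := by
    have step : μ * (F x - F Xs) ≤ μ * ⟪g, x - Xs⟫ - μ * (1/(2*Lf) * ‖g‖^2) := by
      nlinarith [mul_le_mul_of_nonneg_left hlow (le_of_lt hμpos)]
    have e : μ * (1/(2*Lf) * ‖g‖^2) = 1/(2*(μ*Lf)) * ‖a‖^2 := by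
      rw [ina]; field_simp
    have mono : 1/(2*M) * ‖a‖^2 ≤ 1/(2*(μ*Lf)) * ‖a‖^2 := by
      apply mul_le_mul_of_nonneg_right _ (sq_nonneg _)
      apply one_div_le_one_div_of_le (by positivity)
      linarith
    rw [ia]
    linarith [step, e, mono]
  have j2 : 1/(2*M) * ‖b‖^2 ≤ ⟪x - Xs, L (x - Xs)⟫/2 := by
    calc 1/(2*M) * ‖b‖^2 ≤ 1/(2*M) * (M * ⟪x - Xs, L (x - Xs)⟫) := by
          apply mul_le_mul_of_nonneg_left _ (by positivity)
          calc ‖b‖^2 ≤ lambar * ⟪x - Xs, L (x - Xs)⟫ := inb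
            _ ≤ M * ⟪x - Xs, L (x - Xs)⟫ := by nlinarith
      _ = ⟪x - Xs, L (x - Xs)⟫/2 := by field_simp
  have j3 : ‖a + b‖^2 ≤ 2*‖a‖^2 + 2*‖b‖^2 := by
    have t1 := norm_add_sq_real a b
    have t2 := real_inner_le_norm a b
    have t3 : 2*(‖a‖*‖b‖) ≤ ‖a‖^2 + ‖b‖^2 := by nlinarith [sq_nonneg (‖a‖ - ‖b‖)]
    linarith
  have j4 : 1/(4*M) * ‖a + b‖^2 ≤ 1/(2*M) * ‖a‖^2 + 1/(2*M) * ‖b‖^2 := by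
    calc 1/(4*M) * ‖a + b‖^2 ≤ 1/(4*M) * (2*‖a‖^2 + 2*‖b‖^2) := by
          apply mul_le_mul_of_nonneg_left j3 (by positivity)
      _ = 1/(2*M) * ‖a‖^2 + 1/(2*M) * ‖b‖^2 := by field_simp; ring
  rw [hGeq, inner_add_left, ib]
  linarith [j1, j2, j4]

set_option maxHeartbeats 1000000 in
lemma dAGM_descent_step (F : H → ℝ) (hF : Differentiable ℝ F)
    (Lf : ℝ) (hLf : 0 < Lf)
    (hlip : ∀ x y : H, ‖gradient F x - gradient F y‖ ≤ Lf * ‖x - y‖)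
    (L : H →L[ℝ] H) (hsym : ∀ x y : H, ⟪L x, y⟫ = ⟪x, L y⟫)
    (hpsd : ∀ x : H, 0 ≤ ⟪x, L x⟫) (lambar : ℝ) (hlam : ‖L‖ = lambar)
    (Xs : H) (hXs : L Xs = 0)
    (h β : ℝ) (hh : 0 < h) (m : ℕ) (hm : 1 ≤ m) (x : H) (sm : ℝ) (hs : 0 < sm)
    (hstep : sm ≤ 1 / max lambar (muSeq h β m * Lf)) :
    muSeq h β m * (F (x - (sm/2) • Gmap h β F L m x) - F Xs)
      ≤ muSeq h β m * (F x - F Xs) + 1/2 * ⟪x - Xs, L (x - Xs)⟫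
        - sm/4 * ‖Gmap h β F L m x‖^2 := by
  have hμpos : 0 < muSeq h β m := dAGM_mu_pos h β hh m hm
  set μ := muSeq h β m with hμ
  set G := Gmap h β F L m x with hG
  set d : H := -(sm/2) • G with hd
  set M := max lambar (μ * Lf) with hM
  have hMpos : 0 < M := lt_of_lt_of_le (by positivity) (le_max_right _ _)
  have hMlf : μ * Lf ≤ M := le_max_right _ _
  have hMlam : lambar ≤ M := le_max_left _ _
  have hsM : sm * M ≤ 1 := by
    rw [le_div_iff₀ hMpos] at hstep; linarith
  have hxd : x - (sm/2) • G = x + d := by rw [hd, neg_smul]; abel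
  set g := gradient F x with hg
  set N := ‖G‖^2 with hN
  have hNnn : 0 ≤ N := sq_nonneg _
  have hnd : ‖d‖^2 = sm^2/4 * N := by
    rw [hd, norm_smul, Real.norm_eq_abs, abs_neg, abs_of_pos (by positivity : (0:ℝ) < sm/2),
      mul_pow, hN]
    ring
  have hdesc := dAGM_descent F hF Lf hlip x d
  rw [hnd] at hdesc
  have hGd : ⟪G, d⟫ = -(sm/2) * N := by
    rw [hd, real_inner_smul_right, real_inner_self_eq_norm_sq, ← hN]
  have hGsplit : G = μ • g + L x := dAGM_Gmap_eq h β F L m x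
  have hgd : μ * ⟪g, d⟫ + ⟪L x, d⟫ = -(sm/2) * N := by
    rw [← real_inner_smul_left, ← inner_add_left, ← hGsplit, hGd]
  have hLsub : L (x - Xs) = L x := by rw [map_sub, hXs, sub_zero]
  have hquad : ⟪x + d - Xs, L (x + d - Xs)⟫
      = ⟪x - Xs, L (x - Xs)⟫ + 2 * ⟪L x, d⟫ + ⟪d, L d⟫ := by
    have e0 : x + d - Xs = (x - Xs) + d := by abel
    rw [e0, map_add, inner_add_left, inner_add_right, inner_add_right]
    have e1 : ⟪x - Xs, L d⟫ = ⟪L x, d⟫ := by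
      rw [← hsym, hLsub]
    have e2 : ⟪d, L (x - Xs)⟫ = ⟪L x, d⟫ := by
      rw [hLsub]; exact real_inner_comm _ _
    rw [e1, e2]
    ring
  have hdLd : ⟪d, L d⟫ ≤ lambar * (sm^2/4 * N) := by
    have h0 := dAGM_op_ub L d
    rw [hlam, hnd] at h0
    exact h0
  have hqnn : 0 ≤ ⟪x + d - Xs, L (x + d - Xs)⟫ := hpsd _
  have hmul := mul_le_mul_of_nonneg_left hdesc (le_of_lt hμpos)
  have hcoef1 : μ * (Lf/2 * (sm^2/4*N)) + lambar/2 * (sm^2/4*N) ≤ M * (sm^2/4*N) := by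
    nlinarith [hMlf, hMlam, hNnn, sq_nonneg sm]
  have hcoef2 : M * (sm^2/4*N) ≤ sm/4 * N := by
    nlinarith [mul_le_mul_of_nonneg_right hsM (show (0:ℝ) ≤ sm/4*N by positivity)]
  rw [hxd]
  nlinarith [hmul, hgd, hquad, hdLd, hqnn, hcoef1, hcoef2]

end dAGMAux2
section dAGMClaim1
open Set

lemma dAGM_rho1 (k : ℕ) (hk : 1 ≤ k) :
    (ASeq k + thetaSeq (k+1)) * (thetaSeq k ^2 / thetaSeq (k+1)^2) = ASeq k := by
  rw [dAGM_ASeq_eq, dAGM_theta_succ, thetaSeq]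
  have hK : (1:ℝ) ≤ (k:ℝ) := by exact_mod_cast hk
  have h1 : (2*(k:ℝ)+1) ≠ 0 := by positivity
  have h2 : ((k:ℝ)+1) ≠ 0 := by positivity
  field_simp
  ring

lemma dAGM_rho2 (k : ℕ) (hk : 1 ≤ k) :
    (ASeq k + thetaSeq (k+1)) * (1 - thetaSeq k ^2 / thetaSeq (k+1)^2) = thetaSeq (k+1) := by
  rw [dAGM_ASeq_eq, dAGM_theta_succ, thetaSeq]
  have hK : (1:ℝ) ≤ (k:ℝ) := by exact_mod_cast hk
  have h1 : (2*(k:ℝ)+1) ≠ 0 := by positivity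
  have h2 : ((k:ℝ)+1) ≠ 0 := by positivity
  field_simp
  ring

variable {H : Type*} [NormedAddCommGroup H] [InnerProductSpace ℝ H] [FiniteDimensional ℝ H]

set_option maxHeartbeats 2000000 in
lemma dAGM_claim1 (F : H → ℝ) (hF : Differentiable ℝ F) (hconv : ConvexOn ℝ Set.univ F)
    (Lf : ℝ) (hLf : 0 < Lf)
    (hlip : ∀ x y : H, ‖gradient F x - gradient F y‖ ≤ Lf * ‖x - y‖)
    (L : H →L[ℝ] H) (hsym : ∀ x y : H, ⟪L x, y⟫ = ⟪x, L y⟫)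
    (hpsd : ∀ x : H, 0 ≤ ⟪x, L x⟫)
    (lambar : ℝ) (hlam : ‖L‖ = lambar)
    (Xs : H) (hXs : L Xs = 0) (hmin : ∀ Y : H, F Xs ≤ F Y)
    (h β : ℝ) (hh : 0 < h)
    (X Xp Z : ℕ → H) (s : ℕ → ℝ)
    (hspos : ∀ k, 1 ≤ k → 0 < s k)
    (hXp : ∀ k, 1 ≤ k → Xp k = X k - (s k / 2) • Gmap h β F L k (X k))
    (hZupd : ∀ k, 1 ≤ k → Z (k + 1) = Z k - (s k * thetaSeq k) • Gmap h β F L k (X k))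
    (hXupd : ∀ k, 1 ≤ k → X (k + 1) = (thetaSeq k ^ 2 / thetaSeq (k + 1) ^ 2) • Xp k
        + (1 - thetaSeq k ^ 2 / thetaSeq (k + 1) ^ 2) • Z (k + 1))
    (hcases : ∀ k, 1 ≤ k →
      (wSeq h β F L X k ≤ 0 → 0 ≤ rSeq h β F L Xs X k →
        s (k + 1) * bSeq h β F L X k ≤ 4 * aSeq h β F L Xs X k)
      ∧ (wSeq h β F L X k ≤ 0 → rSeq h β F L Xs X k < 0 →
        s (k + 1) * (ASeq k * bSeq h β F L X k
            + thetaSeq (k + 1) * (-(rSeq h β F L Xs X k)))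
          ≤ 4 * ASeq k * aSeq h β F L Xs X k)
      ∧ (0 < wSeq h β F L X k → 0 ≤ rSeq h β F L Xs X k →
        s (k + 1) * btilSeq h β F L X k ≤ 4 * atilSeq h β F L Xs X s k)
      ∧ (0 < wSeq h β F L X k → rSeq h β F L Xs X k < 0 →
        s (k + 1) * (ASeq k * btilSeq h β F L X k
            + thetaSeq (k + 1) * (-(rSeq h β F L Xs X k)))
          ≤ 4 * ASeq k * atilSeq h β F L Xs X s k))
    (hmono : ∀ k, 1 ≤ k → s k ≤ s (k + 1))
    (hstep : ∀ k, 1 ≤ k → s k ≤ 1 / max lambar (((k : ℝ) * h) ^ (-β) * Lf))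
    (k : ℕ) (hk : 1 ≤ k) :
    VSeq h β F L Xs X Z s (k+1) ≤ VSeq h β F L Xs X Z s k := by
  have grad0 := dAGM_grad_min_zero F hF Xs hmin
  have hr0 : rSeq h β F L Xs X k = 0 := by simp [rSeq, grad0]
  have hk1 : 1 ≤ k + 1 := by omega
  set θ' := thetaSeq (k+1) with hθ'
  have hθ'pos : 0 < θ' := by
    rw [hθ', dAGM_theta_succ]
    have : (0:ℝ) ≤ (k:ℝ) := Nat.cast_nonneg k
    linarith
  set A := ASeq k with hA
  set A' := ASeq (k+1) with hA'
  have hApos : 0 < A := dAGM_ASeq_pos k hk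
  have hskpos : 0 < s k := hspos k hk
  have hsk'pos : 0 < s (k+1) := hspos (k+1) hk1
  have hss : s k ≤ s (k+1) := hmono k hk
  set G : H := Gmap h β F L k (X k) with hGdef
  set G' : H := Gmap h β F L (k+1) (X (k+1)) with hG'def
  set nk := ‖G‖^2 with hnk
  set nk' := ‖G'‖^2 with hnk'
  set p := ⟪G', X (k+1) - Xs⟫ with hp
  set q := ⟪G', X k - X (k+1)⟫ with hq
  set w := ⟪G', G⟫ with hw
  set Φ := muSeq h β k * (F (X k) - F Xs) + 1/2 * ⟪X k - Xs, L (X k - Xs)⟫ with hΦ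
  set Φ' := muSeq h β (k+1) * (F (X (k+1)) - F Xs)
      + 1/2 * ⟪X (k+1) - Xs, L (X (k+1) - Xs)⟫ with hΦ'
  -- VSeq unfoldings
  have hVk : VSeq h β F L Xs X Z s k
      = 2*A*(Φ - s k/4*nk) + (1/s k)*‖Z (k+1) - Xs‖^2 := by
    rw [VSeq, hΦ, hA, hnk, hGdef, dAGM_mu_eq]
  have hVk' : VSeq h β F L Xs X Z s (k+1)
      = 2*A'*(Φ' - s (k+1)/4*nk') + (1/s (k+1))*‖Z (k+1+1) - Xs‖^2 := by
    rw [VSeq, hΦ', hA', hnk', hG'def, dAGM_mu_eq]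
  -- a
  have haS : aSeq h β F L Xs X k = Φ - Φ' - q := by
    rw [aSeq, hΦ, hΦ', hq, hG'def, dAGM_mu_eq, dAGM_mu_eq]
    ring
  -- vector identity
  have hvec : (A + θ') • (X (k+1)) = A • (Xp k) + θ' • (Z (k+1)) := by
    rw [hXupd k hk, smul_add, smul_smul, smul_smul, hA, hθ', dAGM_rho1 k hk, dAGM_rho2 k hk]
  have hvec2 : θ' • (Z (k+1) - Xs) = (A + θ') • (X (k+1) - Xs) - A • (Xp k - Xs) := by
    rw [smul_sub, smul_sub, smul_sub, hvec]
    module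
  have hinner : θ' * ⟪G', Z (k+1) - Xs⟫ = θ'*p - A*q + s k/2*A*w := by
    have e1 : ⟪G', θ' • (Z (k+1) - Xs)⟫
        = ⟪G', (A + θ') • (X (k+1) - Xs) - A • (Xp k - Xs)⟫ := by rw [hvec2]
    rw [hXp k hk, ← hGdef] at e1
    simp only [inner_sub_right, inner_add_right, real_inner_smul_right] at e1
    rw [hp, hq, hw]
    simp only [inner_sub_right, real_inner_smul_right]
    linarith only [e1]
  -- Z expansion
  have hZe : Z (k+1+1) - Xs = (Z (k+1) - Xs) - (s (k+1) * θ') • G' := by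
    rw [hZupd (k+1) hk1, hθ', hG'def]; abel
  have hzn : ‖Z (k+1+1) - Xs‖^2 = ‖Z (k+1) - Xs‖^2
      - 2*(s (k+1)*θ')*⟪G', Z (k+1) - Xs⟫ + (s (k+1))^2*θ'^2*nk' := by
    have e1 : ⟪Z (k+1) - Xs, (s (k+1)*θ') • G'⟫ = (s (k+1)*θ')*⟪G', Z (k+1) - Xs⟫ := by
      rw [real_inner_smul_right, real_inner_comm]
    have e2 : ‖(s (k+1)*θ') • G'‖^2 = (s (k+1))^2*θ'^2*nk' := by
      rw [norm_smul, Real.norm_eq_abs, abs_of_pos (by positivity), mul_pow, hnk']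
      ring
    rw [hZe, norm_sub_sq_real, e1, e2]
    ring
  -- Phi' bounds
  have hμ'pos : 0 < muSeq h β (k+1) := dAGM_mu_pos h β hh (k+1) hk1
  have hM'pos : (0:ℝ) < max lambar (muSeq h β (k+1) * Lf) :=
    lt_of_lt_of_le (mul_pos hμ'pos hLf) (le_max_right _ _)
  have hΦ'ubf := dAGM_Phi_ub F hF hconv Lf hLf hlip L hsym hpsd lambar hlam Xs hXs hmin
      h β hh (k+1) hk1 (X (k+1))
  rw [← hG'def, ← hp, ← hnk', ← hΦ'] at hΦ'ubf
  have hstep' : s (k+1) ≤ 1 / max lambar (muSeq h β (k+1) * Lf) := by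
    have := hstep (k+1) hk1
    simpa [muSeq] using this
  have hnk'nn : (0:ℝ) ≤ nk' := by rw [hnk']; positivity
  have hnknn : (0:ℝ) ≤ nk := by rw [hnk]; positivity
  have hM'ne : max lambar (muSeq h β (k+1) * Lf) ≠ 0 := ne_of_gt hM'pos
  have e4 : Φ' ≤ p - s (k+1)/4 * nk' := by
    have h1 := mul_le_mul_of_nonneg_right hstep' hnk'nn
    have h2 : (1/(max lambar (muSeq h β (k+1)*Lf)))*nk' / 4
        = 1/(4*(max lambar (muSeq h β (k+1)*Lf)))*nk' := by
      field_simp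
    linarith only [hΦ'ubf, h1, h2]
  have hΦ'nn : 0 ≤ Φ' := by
    rw [hΦ']
    have h1 := hpsd (X (k+1) - Xs)
    have h2 := hmin (X (k+1))
    have h3 := mul_nonneg (le_of_lt hμ'pos) (show (0:ℝ) ≤ F (X (k+1)) - F Xs by linarith)
    linarith
  -- b, w, atil, btil identities
  have hbS : bSeq h β F L X k = nk + nk' - 2*w := by
    rw [bSeq, ← hGdef, ← hG'def, norm_sub_sq_real, hnk, hnk', hw]
    have : ⟪G, G'⟫ = ⟪G', G⟫ := real_inner_comm _ _
    rw [this]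
    ring
  have hwS : wSeq h β F L X k = w := by
    rw [wSeq, ← hGdef, ← hG'def, hw]
  have hatilS : atilSeq h β F L Xs X s k = (Φ - Φ' - q) + s k/2 * w := by
    rw [atilSeq, haS, ← hGdef, ← hG'def, hw]
  have hbtilS : btilSeq h β F L X k = nk + nk' := by
    rw [btilSeq, ← hGdef, ← hG'def, hnk, hnk']
  -- scalar chain
  have E1 : (1/s (k+1)) * ‖Z (k+1+1) - Xs‖^2
      = (1/s (k+1)) * ‖Z (k+1) - Xs‖^2 - 2*θ'*⟪G', Z (k+1) - Xs⟫ + s (k+1)*θ'^2*nk' := by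
    have hs'ne : s (k+1) ≠ 0 := ne_of_gt hsk'pos
    rw [hzn]
    field_simp
  have m4 : (1/s (k+1)) * ‖Z (k+1) - Xs‖^2 ≤ (1/s k) * ‖Z (k+1) - Xs‖^2 :=
    mul_le_mul_of_nonneg_right (one_div_le_one_div_of_le hskpos hss) (sq_nonneg _)
  have m5 : θ'*Φ' + θ'*(s (k+1)/4)*nk' ≤ θ'*p := by
    have h5 := mul_le_mul_of_nonneg_left e4 (le_of_lt hθ'pos)
    rw [mul_sub] at h5
    linarith only [h5]
  have m2 : A'*Φ' ≤ A*Φ' + θ'*Φ' := by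
    have hc2 : A' - A - θ' ≤ 0 := by rw [hA', hA, hθ']; exact dAGM_c2 k
    have h0 := mul_le_mul_of_nonneg_right hc2 hΦ'nn
    rw [zero_mul] at h0
    linarith only [h0]
  have m1 : (θ'^2 - A'/2 - θ'/2) * (s (k+1)*nk') ≤ A/2 * (s (k+1)*nk') := by
    apply mul_le_mul_of_nonneg_right _ (by positivity)
    have := dAGM_c4 k hk
    rw [← hθ', ← hA', ← hA] at this
    linarith
  have m3 : s k*(A*nk) ≤ s (k+1)*(A*nk) :=
    mul_le_mul_of_nonneg_right hss (by positivity)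
  rw [hVk, hVk']
  clear_value θ' A A' G G' nk nk' p q w Φ Φ'
  rcases le_or_gt w 0 with hw0 | hw0
  · have hc := (hcases k hk).1 (by rw [hwS]; exact hw0) (by rw [hr0])
    rw [hbS, haS] at hc
    have hcA := mul_le_mul_of_nonneg_left hc (show (0:ℝ) ≤ A/2 by linarith)
    have hAw : A*w ≤ 0 := mul_nonpos_iff.2 (Or.inl ⟨le_of_lt hApos, hw0⟩)
    have m6 : s (k+1) * (A*w) ≤ s k * (A*w) := mul_le_mul_of_nonpos_right hss hAw
    linarith only [E1, hinner, m1, m2, m3, m4, m5, hcA, m6]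
  · have hc := (hcases k hk).2.2.1 (by rw [hwS]; exact hw0) (by rw [hr0])
    rw [hbtilS, hatilS] at hc
    have hcA := mul_le_mul_of_nonneg_left hc (show (0:ℝ) ≤ A/2 by linarith)
    linarith only [E1, hinner, m1, m2, m3, m4, m5, hcA]

end dAGMClaim1
section dAGMClaim2
open Set
variable {H : Type*} [NormedAddCommGroup H] [InnerProductSpace ℝ H] [FiniteDimensional ℝ H]

set_option maxHeartbeats 1000000 in
lemma dAGM_claim2 (F : H → ℝ) (hF : Differentiable ℝ F) (hconv : ConvexOn ℝ Set.univ F)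
    (Lf : ℝ) (hLf : 0 < Lf)
    (hlip : ∀ x y : H, ‖gradient F x - gradient F y‖ ≤ Lf * ‖x - y‖)
    (L : H →L[ℝ] H) (hsym : ∀ x y : H, ⟪L x, y⟫ = ⟪x, L y⟫)
    (hpsd : ∀ x : H, 0 ≤ ⟪x, L x⟫)
    (lambar : ℝ) (hlam : ‖L‖ = lambar)
    (Xs : H) (hXs : L Xs = 0) (hmin : ∀ Y : H, F Xs ≤ F Y)
    (h β : ℝ) (hh : 0 < h)
    (X Z : ℕ → H) (s : ℕ → ℝ)
    (hspos : ∀ k, 1 ≤ k → 0 < s k)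
    (hZupd : ∀ k, 1 ≤ k → Z (k + 1) = Z k - (s k * thetaSeq k) • Gmap h β F L k (X k))
    (hinit : X 0 = Z 0) (hZ1 : Z 1 = Z 0) (hX1 : X 1 = X 0)
    (hs0 : 0 < s 0) (hs01 : s 0 ≤ s 1)
    (hs1 : s 1 ≤ 2 / LSmooth lambar Lf h β 1) :
    VSeq h β F L Xs X Z s 1 ≤ ‖X 0 - Xs‖^2 / s 0 := by
  have hs1pos : 0 < s 1 := hspos 1 (le_refl 1)
  have hμpos : 0 < muSeq h β 1 := dAGM_mu_pos h β hh 1 (le_refl 1)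
  set μ := muSeq h β 1 with hμ
  set M := max lambar (μ * Lf) with hM
  have hMpos : 0 < M := lt_of_lt_of_le (mul_pos hμpos hLf) (le_max_right _ _)
  have hMlam : lambar ≤ M := le_max_left _ _
  have hMlf : μ * Lf ≤ M := le_max_right _ _
  have hLs : LSmooth lambar Lf h β 1 = 2*M := by
    rw [LSmooth, hM, hμ, muSeq]
  have hs1M : s 1 * M ≤ 1 := by
    rw [hLs] at hs1
    have e : (2:ℝ)/(2*M) = 1/M := by
      field_simp
    rw [e, le_div_iff₀ hMpos] at hs1
    linarith
  set g := gradient F (X 1) with hg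
  set G : H := Gmap h β F L 1 (X 1) with hGdef
  set N := ‖G‖^2 with hN
  have hNnn : 0 ≤ N := sq_nonneg _
  set u := μ * ⟪g, X 1 - Xs⟫ with hu
  set v := ⟪X 1 - Xs, L (X 1 - Xs)⟫ with hv
  have hvnn : 0 ≤ v := hpsd _
  have hLsub : L (X 1 - Xs) = L (X 1) := by rw [map_sub, hXs, sub_zero]
  -- lower bound facts
  have f1 := dAGM_lower F hF hconv Lf hLf hlip Xs hmin (X 1)
  have hΔnn : 0 ≤ F (X 1) - F Xs := by linarith [hmin (X 1)]
  have h2Lf : (0:ℝ) < 2*Lf := by linarith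
  have hgu : ‖g‖^2 ≤ 2*Lf*⟪g, X 1 - Xs⟫ := by
    have h1 := f1
    rw [← hg] at h1
    have h3 : 1/(2*Lf)*‖g‖^2 ≤ ⟪g, X 1 - Xs⟫ := by linarith
    have h4 := mul_le_mul_of_nonneg_left h3 (le_of_lt h2Lf)
    have e : (2*Lf)*(1/(2*Lf)*‖g‖^2) = ‖g‖^2 := by field_simp
    linarith
  have hunn : 0 ≤ u := by
    have h5 : 0 ≤ ⟪g, X 1 - Xs⟫ := by nlinarith [hgu, sq_nonneg ‖g‖, h2Lf]
    exact mul_nonneg (le_of_lt hμpos) h5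
  have f7 : μ * (F (X 1) - F Xs) ≤ u := by
    have h0 := mul_le_mul_of_nonneg_left f1 (le_of_lt hμpos)
    rw [← hg] at h0
    have h1 : 0 ≤ μ * (1/(2*Lf) * ‖g‖^2) := by positivity
    rw [hu]
    nlinarith [h0, h1]
  -- norm bounds
  have hLb : ‖L (X 1)‖^2 ≤ lambar * v := by
    have h0 := dAGM_op_sq L hsym hpsd (X 1 - Xs)
    rw [hlam] at h0
    rw [← hLsub]
    exact h0
  have hGsplit : G = μ • g + L (X 1) := dAGM_Gmap_eq h β F L 1 (X 1)
  have hNle : N ≤ 4*(μ*Lf)*u + 2*(lambar*v) := by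
    have t1 : ‖μ • g + L (X 1)‖^2 ≤ 2*‖μ • g‖^2 + 2*‖L (X 1)‖^2 := by
      have a1 := norm_add_sq_real (μ • g) (L (X 1))
      have a2 := real_inner_le_norm (μ • g) (L (X 1))
      have a3 : 2*(‖μ • g‖*‖L (X 1)‖) ≤ ‖μ • g‖^2 + ‖L (X 1)‖^2 := by
        nlinarith [sq_nonneg (‖μ • g‖ - ‖L (X 1)‖)]
      linarith
    have t2 : ‖μ • g‖^2 = μ^2*‖g‖^2 := by
      rw [norm_smul, Real.norm_eq_abs, abs_of_pos hμpos, mul_pow]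
    have t3 : μ^2*‖g‖^2 ≤ 2*(μ*Lf)*u := by
      rw [hu]
      nlinarith [mul_le_mul_of_nonneg_left hgu (le_of_lt (mul_pos hμpos hμpos))]
    rw [hN, hGsplit]
    nlinarith [t1, t2, t3, hLb]
  have hsN : s 1 * N ≤ 4*u + 2*v := by
    have q0 := mul_le_mul_of_nonneg_left hNle (le_of_lt hs1pos)
    have k1 : s 1 * (μ*Lf) ≤ 1 := le_trans (mul_le_mul_of_nonneg_left hMlf (le_of_lt hs1pos)) hs1M
    have k2 : s 1 * lambar ≤ 1 := le_trans (mul_le_mul_of_nonneg_left hMlam (le_of_lt hs1pos)) hs1M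
    have p1 : s 1 * (μ*Lf) * (4*u) ≤ 1*(4*u) :=
      mul_le_mul_of_nonneg_right k1 (by linarith)
    have p2 : s 1 * lambar * (2*v) ≤ 1*(2*v) :=
      mul_le_mul_of_nonneg_right k2 (by linarith)
    nlinarith [q0, p1, p2]
  -- Z 2 expansion
  have hX1Z1 : Z 1 = X 1 := by rw [hZ1, ← hinit, hX1]
  have hZ2 : Z (1+1) - Xs = (X 1 - Xs) - (s 1/2) • G := by
    rw [hZupd 1 (le_refl 1), hX1Z1, ← hGdef]
    have : thetaSeq 1 = 1/2 := by rw [thetaSeq]; norm_num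
    rw [this]
    rw [show s 1 * (1/2) = s 1/2 by ring]
    abel
  have hXG : ⟪X 1 - Xs, G⟫ = u + v := by
    rw [hGsplit, inner_add_right, real_inner_smul_right, hu, hv, ← hLsub]
    rw [real_inner_comm g (X 1 - Xs)]
  have hZ2n : ‖Z (1+1) - Xs‖^2 = ‖X 1 - Xs‖^2 - s 1*(u+v) + s 1^2/4*N := by
    have e1 : ⟪X 1 - Xs, (s 1/2) • G⟫ = s 1/2*(u+v) := by
      rw [real_inner_smul_right, hXG]
    have e2 : ‖(s 1/2) • G‖^2 = s 1^2/4*N := by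
      rw [norm_smul, Real.norm_eq_abs, abs_of_pos (by positivity : (0:ℝ) < s 1/2), mul_pow, hN]
      ring
    rw [hZ2, norm_sub_sq_real, e1, e2]
    ring
  have E : (1/s 1)*‖Z (1+1) - Xs‖^2
      = (1/s 1)*‖X 1 - Xs‖^2 - (u+v) + s 1/4*N := by
    have hs1ne : s 1 ≠ 0 := ne_of_gt hs1pos
    rw [hZ2n]
    field_simp
  -- VSeq 1
  have hA1 : ASeq 1 = 1/3 := by rw [dAGM_ASeq_eq]; norm_num
  have hV1eq : VSeq h β F L Xs X Z s 1
      = 2*(1/3)*(μ*(F (X 1) - F Xs) + 1/2*v - s 1/4*N) + (1/s 1)*‖Z (1+1) - Xs‖^2 := by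
    rw [VSeq, hA1, hμ, hv, hN, hGdef, dAGM_mu_eq]
  have hX01 : ‖X 0 - Xs‖ = ‖X 1 - Xs‖ := by rw [hX1]
  have hlast : (1/s 1)*‖X 1 - Xs‖^2 ≤ ‖X 1 - Xs‖^2/s 0 := by
    have h6 := one_div_le_one_div_of_le hs0 hs01
    calc (1/s 1)*‖X 1 - Xs‖^2 ≤ (1/s 0)*‖X 1 - Xs‖^2 :=
          mul_le_mul_of_nonneg_right h6 (sq_nonneg _)
      _ = ‖X 1 - Xs‖^2/s 0 := by ring
  rw [hV1eq, hX01]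
  clear_value μ G N u v
  linarith only [f7, hsN, E, hvnn, hunn, hlast]

end dAGMClaim2
/-- Theorem 2: convergence rate of the discretized distributed AGM algorithm:
`F(X_k⁺) − F* ≤ (2h^β ‖X₀ − X*‖²/s₀)·k^{−(2−β)}` for every `k ≥ 1`. -/
theorem discretized_distAGM_convergence_rate
    (F : H → ℝ) (hF : Differentiable ℝ F) (hconv : ConvexOn ℝ Set.univ F)
    (Lf : ℝ) (hLf : 0 < Lf)
    (hlip : ∀ x y : H, ‖gradient F x - gradient F y‖ ≤ Lf * ‖x - y‖)
    (L : H →L[ℝ] H) (hsym : ∀ x y : H, ⟪L x, y⟫ = ⟪x, L y⟫)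
    (hpsd : ∀ x : H, 0 ≤ ⟪x, L x⟫)
    (lambar : ℝ) (hlam : ‖L‖ = lambar)
    (Xs : H) (hXs : L Xs = 0) (hmin : ∀ Y : H, F Xs ≤ F Y)
    (h β : ℝ) (hh : 0 < h) (hβ0 : 0 < β) (hβ2 : β < 2)
    (X Xp Z : ℕ → H) (s : ℕ → ℝ)
    (hspos : ∀ k, 1 ≤ k → 0 < s k)
    (hXp : ∀ k, 1 ≤ k → Xp k = X k - (s k / 2) • Gmap h β F L k (X k))
    (hZupd : ∀ k, 1 ≤ k → Z (k + 1) = Z k - (s k * thetaSeq k) • Gmap h β F L k (X k))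
    (hXupd : ∀ k, 1 ≤ k → X (k + 1) = (thetaSeq k ^ 2 / thetaSeq (k + 1) ^ 2) • Xp k
        + (1 - thetaSeq k ^ 2 / thetaSeq (k + 1) ^ 2) • Z (k + 1))
    (hinit : X 0 = Z 0)
    (hXp0 : Xp 0 = X 0) (hZ1 : Z 1 = Z 0) (hX1 : X 1 = X 0)
    (hs0 : 0 < s 0) (hs01 : s 0 ≤ s 1)
    (hs1 : s 1 ≤ 2 / LSmooth lambar Lf h β 1)
    (hr1 : 0 ≤ rSeq h β F L Xs X 0)
    (hcases : ∀ k, 1 ≤ k →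
      (wSeq h β F L X k ≤ 0 → 0 ≤ rSeq h β F L Xs X k →
        s (k + 1) * bSeq h β F L X k ≤ 4 * aSeq h β F L Xs X k)
      ∧ (wSeq h β F L X k ≤ 0 → rSeq h β F L Xs X k < 0 →
        s (k + 1) * (ASeq k * bSeq h β F L X k
            + thetaSeq (k + 1) * (-(rSeq h β F L Xs X k)))
          ≤ 4 * ASeq k * aSeq h β F L Xs X k)
      ∧ (0 < wSeq h β F L X k → 0 ≤ rSeq h β F L Xs X k →
        s (k + 1) * btilSeq h β F L X k ≤ 4 * atilSeq h β F L Xs X s k)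
      ∧ (0 < wSeq h β F L X k → rSeq h β F L Xs X k < 0 →
        s (k + 1) * (ASeq k * btilSeq h β F L X k
            + thetaSeq (k + 1) * (-(rSeq h β F L Xs X k)))
          ≤ 4 * ASeq k * atilSeq h β F L Xs X s k))
    (hmono : ∀ k, 1 ≤ k → s k ≤ s (k + 1))
    (hstep : ∀ k, 1 ≤ k → s k ≤ 1 / max lambar (((k : ℝ) * h) ^ (-β) * Lf)) :
    ∀ k, 1 ≤ k →
      F (Xp k) - F Xs
        ≤ (2 * h ^ β * ‖X 0 - Xs‖ ^ 2 / s 0) * (k : ℝ) ^ (-(2 - β)) := by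
  have hVmono : ∀ m, 1 ≤ m → VSeq h β F L Xs X Z s m ≤ VSeq h β F L Xs X Z s 1 := by
    intro m hm
    induction m with
    | zero => omega
    | succ n ih =>
      rcases Nat.lt_or_ge n 1 with hlt | hge
      · have : n = 0 := by omega
        rw [this]
      · exact le_trans
          (dAGM_claim1 F hF hconv Lf hLf hlip L hsym hpsd lambar hlam Xs hXs hmin h β hh
            X Xp Z s hspos hXp hZupd hXupd hcases hmono hstep n hge)
          (ih hge)
  have hV1 := dAGM_claim2 F hF hconv Lf hLf hlip L hsym hpsd lambar hlam Xs hXs hmin h β hh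
      X Z s hspos hZupd hinit hZ1 hX1 hs0 hs01 hs1
  intro k hk
  have hApos : 0 < ASeq k := dAGM_ASeq_pos k hk
  have hskpos : 0 < s k := hspos k hk
  have hμpos : 0 < muSeq h β k := dAGM_mu_pos h β hh k hk
  have hK1 : (1:ℝ) ≤ (k:ℝ) := by exact_mod_cast hk
  have hKpos : (0:ℝ) < (k:ℝ) := by linarith
  have hstep' : s k ≤ 1 / max lambar (muSeq h β k * Lf) := by
    simpa [muSeq] using hstep k hk
  have hE := dAGM_descent_step F hF Lf hLf hlip L hsym hpsd lambar hlam Xs hXs h β hh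
      k hk (X k) (s k) hskpos hstep'
  rw [← hXp k hk] at hE
  have hVkeq : VSeq h β F L Xs X Z s k
      = 2*ASeq k*(muSeq h β k*(F (X k) - F Xs) + 1/2*⟪X k - Xs, L (X k - Xs)⟫
          - s k/4*‖Gmap h β F L k (X k)‖^2) + (1/s k)*‖Z (k+1) - Xs‖^2 := by
    rw [VSeq, dAGM_mu_eq]
  have hznn : 0 ≤ (1/s k)*‖Z (k+1) - Xs‖^2 := by positivity
  have chain : 2*ASeq k*(muSeq h β k*(F (Xp k) - F Xs)) ≤ ‖X 0 - Xs‖^2/s 0 := by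
    have h1 := mul_le_mul_of_nonneg_left hE
      (show (0:ℝ) ≤ 2*ASeq k by positivity)
    have h2 := hVmono k hk
    linarith only [h1, h2, hV1, hVkeq, hznn]
  have hfin : F (Xp k) - F Xs ≤ (‖X 0 - Xs‖^2/s 0) / (2*ASeq k*muSeq h β k) := by
    rw [le_div_iff₀ (by positivity)]
    linarith only [chain]
  have hμinv : muSeq h β k = (((k:ℝ)*h)^β)⁻¹ := by
    rw [muSeq, Real.rpow_neg (by positivity)]
  have e5 : (‖X 0 - Xs‖^2/s 0) / (2*ASeq k*muSeq h β k)
      = (‖X 0 - Xs‖^2/s 0) * ((k:ℝ)*h)^β / (2*ASeq k) := by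
    rw [hμinv]
    have hne1 : ((k:ℝ)*h)^β ≠ 0 := by positivity
    have hne2 : ASeq k ≠ 0 := ne_of_gt hApos
    field_simp
  have e6 : ((k:ℝ))^(-(2-β)) = (k:ℝ)^β * (((k:ℝ))^2)⁻¹ := by
    rw [show -(2-β) = β + (-2:ℝ) by ring, Real.rpow_add hKpos, Real.rpow_neg (le_of_lt hKpos),
      show ((2:ℝ)) = ((2:ℕ):ℝ) by norm_num, Real.rpow_natCast]
  have e7 : ((k:ℝ)*h)^β = (k:ℝ)^β * h^β :=
    Real.mul_rpow (le_of_lt hKpos) (le_of_lt hh)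
  have harith : (‖X 0 - Xs‖^2/s 0) * ((k:ℝ)*h)^β / (2*ASeq k)
      ≤ (2 * h ^ β * ‖X 0 - Xs‖ ^ 2 / s 0) * ((k:ℝ))^(-(2-β)) := by
    rw [e6, e7]
    have e8 : (2 * h ^ β * ‖X 0 - Xs‖ ^ 2 / s 0) * ((k:ℝ)^β * (((k:ℝ))^2)⁻¹)
        = (2 * h ^ β * (‖X 0 - Xs‖ ^ 2 / s 0) * (k:ℝ)^β) / ((k:ℝ))^2 := by
      ring
    rw [e8]
    rw [div_le_div_iff₀ (by positivity) (by positivity)]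
    have hC : (0:ℝ) ≤ ‖X 0 - Xs‖^2/s 0 * ((k:ℝ)^β * h^β) := by positivity
    have h4A := dAGM_fourA k hk
    nlinarith [mul_le_mul_of_nonneg_left h4A hC]
  calc F (Xp k) - F Xs
      ≤ (‖X 0 - Xs‖^2/s 0) / (2*ASeq k*muSeq h β k) := hfin
    _ = (‖X 0 - Xs‖^2/s 0) * ((k:ℝ)*h)^β / (2*ASeq k) := e5
    _ ≤ (2 * h ^ β * ‖X 0 - Xs‖ ^ 2 / s 0) * ((k:ℝ))^(-(2-β)) := harith
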